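/- arXiv:2312.10283 — 2 statements merged into one kernel-verified Lean document; each statement's English description precedes it below -/
import Mathlib

section
/- Let $M_c(s) = f_0 + g^T s + \tfrac12 s^T H s + \tfrac{\beta}{6}\|s\|_W^3 + \tfrac{\sigma_c}{4}\|s\|_W^4$ with $\sigma_c > 0$, $W$ symmetric positive definite, $H$ symmetric. If $s_c$ is a global minimizer of $M_c$ over $\mathbb{R}^n$, then $B(s_c) s_c = -g$ where $B(s_c) := H + \tfrac{\beta}{2}\|s_c\|_W W + \sigma_c \|s_c\|_W^2 W$, and $B(s_c)$ is positive semidefinite. -/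
open Matrix Filter

noncomputable def normW {n : ℕ} (W : Matrix (Fin n) (Fin n) ℝ) (v : Fin n → ℝ) : ℝ :=
  Real.sqrt (v ⬝ᵥ W.mulVec v)

noncomputable def Mc {n : ℕ} (f0 : ℝ) (g : Fin n → ℝ) (H W : Matrix (Fin n) (Fin n) ℝ)
    (β σc : ℝ) (s : Fin n → ℝ) : ℝ :=
  f0 + g ⬝ᵥ s + (1 / 2) * (s ⬝ᵥ H.mulVec s) + (β / 6) * (normW W s) ^ 3
    + (σc / 4) * (normW W s) ^ 4

namespace Stmt1Aux

variable {n : ℕ}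

lemma bilin_symm {M : Matrix (Fin n) (Fin n) ℝ} (hM : M.IsSymm) (x y : Fin n → ℝ) :
    x ⬝ᵥ M.mulVec y = y ⬝ᵥ M.mulVec x := by
  rw [Matrix.dotProduct_mulVec, ← Matrix.mulVec_transpose, hM.eq, dotProduct_comm]

lemma bilin_expand {M : Matrix (Fin n) (Fin n) ℝ} (hM : M.IsSymm) (x v : Fin n → ℝ) (t : ℝ) :
    (x + t • v) ⬝ᵥ M.mulVec (x + t • v)
      = x ⬝ᵥ M.mulVec x + 2 * (x ⬝ᵥ M.mulVec v) * t + (v ⬝ᵥ M.mulVec v) * t ^ 2 := by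
  rw [Matrix.mulVec_add, Matrix.mulVec_smul]
  simp only [dotProduct_add, add_dotProduct, smul_dotProduct,
    dotProduct_smul, smul_eq_mul, bilin_symm hM v x]
  ring

lemma cube_eq {x : ℝ} (hx : 0 ≤ x) : Real.sqrt x ^ 3 = x * Real.sqrt x := by
  rw [pow_succ, Real.sq_sqrt hx]

lemma quart_eq {x : ℝ} (hx : 0 ≤ x) : Real.sqrt x ^ 4 = x ^ 2 := by
  rw [show (4:ℕ) = 2*2 by norm_num, pow_mul, Real.sq_sqrt hx]

lemma Mc_expand (f0 : ℝ) (g : Fin n → ℝ) (H W : Matrix (Fin n) (Fin n) ℝ) (β σc : ℝ)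
    (hH : H.IsSymm) (hW : W.PosDef) (s v : Fin n → ℝ) (t : ℝ) :
    Mc f0 g H W β σc (s + t • v)
      = f0 + g ⬝ᵥ s + (g ⬝ᵥ v) * t
        + (1/2) * (s ⬝ᵥ H.mulVec s + 2 * (s ⬝ᵥ H.mulVec v) * t + (v ⬝ᵥ H.mulVec v) * t ^ 2)
        + (β/6) * ((s ⬝ᵥ W.mulVec s + 2 * (s ⬝ᵥ W.mulVec v) * t + (v ⬝ᵥ W.mulVec v) * t ^ 2)
            * Real.sqrt (s ⬝ᵥ W.mulVec s + 2 * (s ⬝ᵥ W.mulVec v) * t + (v ⬝ᵥ W.mulVec v) * t ^ 2))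
        + (σc/4) * (s ⬝ᵥ W.mulVec s + 2 * (s ⬝ᵥ W.mulVec v) * t + (v ⬝ᵥ W.mulVec v) * t ^ 2) ^ 2 := by
  have hWs : W.IsSymm := hW.1
  have hq : (s + t • v) ⬝ᵥ W.mulVec (s + t • v)
      = s ⬝ᵥ W.mulVec s + 2 * (s ⬝ᵥ W.mulVec v) * t + (v ⬝ᵥ W.mulVec v) * t ^ 2 :=
    bilin_expand hWs s v t
  have hq0 : 0 ≤ s ⬝ᵥ W.mulVec s + 2 * (s ⬝ᵥ W.mulVec v) * t + (v ⬝ᵥ W.mulVec v) * t ^ 2 := by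
    rw [← hq]
    simpa using hW.posSemidef.dotProduct_mulVec_nonneg (s + t • v)
  rw [Mc, normW, hq, bilin_expand hH s v t, cube_eq hq0, quart_eq hq0]
  simp only [dotProduct_add, dotProduct_smul, smul_eq_mul]
  ring

lemma hasDerivAt_quadpoly (c a b : ℝ) :
    HasDerivAt (fun t : ℝ => c + 2*a*t + b*t^2) (2*a) 0 := by
  have h := (((hasDerivAt_id (0:ℝ)).const_mul (2*a)).const_add c).add
    ((hasDerivAt_pow 2 (0:ℝ)).const_mul b)
  exact h.congr_deriv (by norm_num)

lemma hasDerivAt_qsqrt (c a b : ℝ) (hc : 0 ≤ c) (hb : 0 ≤ b) (h0 : c = 0 → a = 0) :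
    HasDerivAt (fun t : ℝ => (c + 2*a*t + b*t^2) * Real.sqrt (c + 2*a*t + b*t^2))
      (3 * Real.sqrt c * a) 0 := by
  rcases lt_or_eq_of_le hc with hc' | hc'
  · have hq := hasDerivAt_quadpoly c a b
    have hg : HasDerivAt Real.sqrt (1/(2*Real.sqrt c)) ((fun t : ℝ => c + 2*a*t + b*t^2) 0) := by
      simpa using Real.hasDerivAt_sqrt (ne_of_gt hc')
    have hs := hg.comp 0 hq
    have hmul := hq.mul hs
    have hsc : Real.sqrt c ≠ 0 := by positivity
    have hcc : Real.sqrt c * Real.sqrt c = c := Real.mul_self_sqrt hc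
    have hval : (2*a) * Real.sqrt c + (c + 2*a*0 + b*0^2) * (1/(2*Real.sqrt c) * (2*a))
        = 3 * Real.sqrt c * a := by
      field_simp
      linear_combination (-a) * hcc
    simp only [Function.comp_apply] at hmul
    exact hmul.congr_deriv (by rw [← hval]; norm_num)
  · have ha : a = 0 := h0 hc'.symm
    subst ha
    subst hc'
    rw [hasDerivAt_iff_tendsto_slope]
    have key : ∀ t : ℝ, t ≠ 0 →
        b * Real.sqrt b * (t * |t|)
          = slope (fun t : ℝ => ((0:ℝ) + 2*0*t + b*t^2) * Real.sqrt ((0:ℝ) + 2*0*t + b*t^2)) 0 t := by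
      intro t ht
      rw [slope_def_field]
      have h1 : Real.sqrt (b * t^2) = Real.sqrt b * |t| := by
        rw [Real.sqrt_mul hb, Real.sqrt_sq_eq_abs]
      simp only [zero_add, mul_zero, zero_mul, add_zero, sub_zero]
      rw [h1]
      field_simp
      ring
    have hcont : Tendsto (fun t : ℝ => b * Real.sqrt b * (t * |t|)) (nhds 0) (nhds 0) := by
      have : Continuous (fun t : ℝ => b * Real.sqrt b * (t * |t|)) := by continuity
      simpa using this.tendsto 0
    have := (hcont.mono_left nhdsWithin_le_nhds).congr'
      (eventually_mem_nhdsWithin.mono fun t ht => key t ht)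
    rw [show (3 * Real.sqrt 0 * 0 : ℝ) = 0 by simp]
    exact this

lemma tendsto_sq_punctured :
    Tendsto (fun t : ℝ => t^2) (nhdsWithin 0 {(0:ℝ)}ᶜ) (nhdsWithin 0 {(0:ℝ)}ᶜ) := by
  rw [tendsto_nhdsWithin_iff]
  constructor
  · have := ((continuous_pow 2).tendsto (0:ℝ)).mono_left (nhdsWithin_le_nhds (s := {(0:ℝ)}ᶜ))
    simpa using this
  · exact eventually_mem_nhdsWithin.mono fun t ht => by
      simp only [Set.mem_compl_iff, Set.mem_singleton_iff] at *
      exact pow_ne_zero 2 ht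

lemma tendsto_cube_slope (c b : ℝ) (hc : 0 ≤ c) (hb : 0 ≤ b) :
    Tendsto (fun t : ℝ => ((c + b*t^2) * Real.sqrt (c + b*t^2) - c * Real.sqrt c) / t^2)
      (nhdsWithin 0 {(0:ℝ)}ᶜ) (nhds ((3/2) * Real.sqrt c * b)) := by
  rcases lt_or_eq_of_le hc with hc' | hc'
  · have hG := hasDerivAt_qsqrt c (b/2) 0 hc le_rfl (fun h => absurd h (ne_of_gt hc'))
    have hslope := hasDerivAt_iff_tendsto_slope.1 hG
    have hcomp := hslope.comp tendsto_sq_punctured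
    have heq : ∀ t : ℝ, t ∈ ({(0:ℝ)}ᶜ : Set ℝ) →
        (slope (fun t : ℝ => (c + 2*(b/2)*t + 0*t^2) * Real.sqrt (c + 2*(b/2)*t + 0*t^2)) 0 ∘
          fun t : ℝ => t^2) t
        = ((c + b*t^2) * Real.sqrt (c + b*t^2) - c * Real.sqrt c) / t^2 := by
      intro t ht
      simp only [Set.mem_compl_iff, Set.mem_singleton_iff] at ht
      have hpoly : ∀ u : ℝ, c + 2*(b/2)*u + 0*u^2 = c + b*u := by intro u; ring
      simp only [Function.comp_apply, slope_def_field, hpoly, sub_zero]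
      norm_num
    have := hcomp.congr' (eventually_mem_nhdsWithin.mono heq)
    convert this using 2
    ring
  · subst hc'
    have key : ∀ t : ℝ, t ∈ ({(0:ℝ)}ᶜ : Set ℝ) →
        b * Real.sqrt b * |t|
          = (((0:ℝ) + b*t^2) * Real.sqrt ((0:ℝ) + b*t^2) - 0 * Real.sqrt 0) / t^2 := by
      intro t ht
      simp only [Set.mem_compl_iff, Set.mem_singleton_iff] at ht
      have h1 : Real.sqrt (b * t^2) = Real.sqrt b * |t| := by
        rw [Real.sqrt_mul hb, Real.sqrt_sq_eq_abs]
      rw [zero_add, h1, zero_mul, sub_zero]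
      have ht2 : t^2 ≠ 0 := pow_ne_zero 2 ht
      field_simp
    have hcont : Tendsto (fun t : ℝ => b * Real.sqrt b * |t|) (nhds 0) (nhds 0) := by
      have : Continuous (fun t : ℝ => b * Real.sqrt b * |t|) := by continuity
      simpa using this.tendsto 0
    have := (hcont.mono_left nhdsWithin_le_nhds).congr'
      (eventually_mem_nhdsWithin.mono key)
    simpa using this

/-- First-order condition for the 1-d restriction. -/
lemma foc (A K cH aH bH c a b β σc : ℝ) (hc : 0 ≤ c) (hb : 0 ≤ b) (h0 : c = 0 → a = 0)
    (hm : IsLocalMin (fun t : ℝ => A + K*t + (1/2)*(cH + 2*aH*t + bH*t^2)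
        + (β/6)*((c + 2*a*t + b*t^2) * Real.sqrt (c + 2*a*t + b*t^2))
        + (σc/4)*(c + 2*a*t + b*t^2)^2) 0) :
    K + aH + ((β/2)*Real.sqrt c + σc*c)*a = 0 := by
  have h1 : HasDerivAt (fun t : ℝ => A + K*t) K 0 := by
    simpa using ((hasDerivAt_id (0:ℝ)).const_mul K).const_add A
  have h2 := (hasDerivAt_quadpoly cH aH bH).const_mul (1/2)
  have h3 := (hasDerivAt_qsqrt c a b hc hb h0).const_mul (β/6)
  have h4 := ((hasDerivAt_quadpoly c a b).pow 2).const_mul (σc/4)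
  have htot := ((h1.add h2).add h3).add h4
  have hz := hm.hasDerivAt_eq_zero htot
  linear_combination hz

lemma psd_alg (bH lam a b : ℝ) (hb : 0 < b) (ha : a ≠ 0)
    (h : 0 ≤ (1/2)*bH*(2*a/b)^2 + lam*a*(2*a/b)) : 0 ≤ bH + lam*b := by
  have h2 : bH + lam*b = (b^2/(2*a^2)) * ((1/2)*bH*(2*a/b)^2 + lam*a*(2*a/b)) := by
    field_simp
  rw [h2]
  exact mul_nonneg (by positivity) h

lemma psd_case2 (bH c b β σc : ℝ) (hc : 0 ≤ c) (hb : 0 ≤ b)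
    (hF : ∀ t : ℝ, 0 ≤ (1/2)*bH*t^2
        + (β/6)*((c + b*t^2)*Real.sqrt (c + b*t^2) - c*Real.sqrt c)
        + (σc/4)*((c + b*t^2)^2 - c^2)) :
    0 ≤ bH + ((β/2)*Real.sqrt c + σc*c)*b := by
  have h1 := (tendsto_cube_slope c b hc hb).const_mul (β/6)
  have h2 : Tendsto (fun t : ℝ => (σc/4)*(2*c*b + b^2*t^2)) (nhdsWithin 0 {(0:ℝ)}ᶜ)
      (nhds ((σc/4)*(2*c*b))) := by
    have hcont : Continuous fun t : ℝ => (σc/4)*(2*c*b + b^2*t^2) := by continuity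
    have := (hcont.tendsto 0).mono_left (nhdsWithin_le_nhds (s := {(0:ℝ)}ᶜ))
    simpa using this
  have h3 := ((tendsto_const_nhds (x := (1/2)*bH) (f := nhdsWithin 0 {(0:ℝ)}ᶜ)).add h1).add h2
  have heq : ∀ t : ℝ, t ∈ ({(0:ℝ)}ᶜ : Set ℝ) →
      (1/2)*bH + (β/6)*(((c + b*t^2)*Real.sqrt (c + b*t^2) - c*Real.sqrt c)/t^2)
        + (σc/4)*(2*c*b + b^2*t^2)
      = ((1/2)*bH*t^2 + (β/6)*((c + b*t^2)*Real.sqrt (c + b*t^2) - c*Real.sqrt c)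
        + (σc/4)*((c + b*t^2)^2 - c^2))/t^2 := by
    intro t ht
    simp only [Set.mem_compl_iff, Set.mem_singleton_iff] at ht
    have ht2 : t^2 ≠ 0 := pow_ne_zero 2 ht
    field_simp
    ring
  have hT := h3.congr' (eventually_mem_nhdsWithin.mono heq)
  have hnn : ∀ᶠ t in nhdsWithin 0 {(0:ℝ)}ᶜ,
      0 ≤ ((1/2)*bH*t^2 + (β/6)*((c + b*t^2)*Real.sqrt (c + b*t^2) - c*Real.sqrt c)
        + (σc/4)*((c + b*t^2)^2 - c^2))/t^2 :=
    Eventually.of_forall fun t => div_nonneg (hF t) (sq_nonneg t)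
  have hlim := ge_of_tendsto hT hnn
  linarith [hlim]

end Stmt1Aux

open Stmt1Aux
theorem stmt_1 {n : ℕ} (f0 : ℝ) (g : Fin n → ℝ) (H W : Matrix (Fin n) (Fin n) ℝ)
    (β σc : ℝ) (hH : H.IsSymm) (hW : W.PosDef) (hσ : 0 < σc)
    (sc : Fin n → ℝ)
    (hmin : ∀ s : Fin n → ℝ, Mc f0 g H W β σc sc ≤ Mc f0 g H W β σc s) :
    (H + ((β / 2) * normW W sc) • W + (σc * (normW W sc) ^ 2) • W).mulVec sc = -g ∧
    (H + ((β / 2) * normW W sc) • W + (σc * (normW W sc) ^ 2) • W).PosSemidef := by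
  have hWs : W.IsSymm := hW.1
  have hc : 0 ≤ sc ⬝ᵥ W.mulVec sc := by simpa using hW.posSemidef.dotProduct_mulVec_nonneg sc
  have hnrm : normW W sc = Real.sqrt (sc ⬝ᵥ W.mulVec sc) := rfl
  have hnrm2 : normW W sc ^ 2 = sc ⬝ᵥ W.mulVec sc := by
    rw [hnrm]; exact Real.sq_sqrt hc
  have h0 : ∀ v : Fin n → ℝ, sc ⬝ᵥ W.mulVec sc = 0 → sc ⬝ᵥ W.mulVec v = 0 := by
    intro v h
    have hsc0 : sc = 0 := by
      by_contra hne
      have := hW.dotProduct_mulVec_pos hne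
      simp only [star_trivial] at this
      exact absurd h (ne_of_gt this)
    simp [hsc0]
  -- first-order condition
  have key : ∀ v : Fin n → ℝ,
      g ⬝ᵥ v + sc ⬝ᵥ H.mulVec v
        + ((β/2)*Real.sqrt (sc ⬝ᵥ W.mulVec sc) + σc*(sc ⬝ᵥ W.mulVec sc)) * (sc ⬝ᵥ W.mulVec v)
        = 0 := by
    intro v
    have hb : 0 ≤ v ⬝ᵥ W.mulVec v := by simpa using hW.posSemidef.dotProduct_mulVec_nonneg v
    apply foc (f0 + g ⬝ᵥ sc) (g ⬝ᵥ v) (sc ⬝ᵥ H.mulVec sc) (sc ⬝ᵥ H.mulVec v)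
      (v ⬝ᵥ H.mulVec v) (sc ⬝ᵥ W.mulVec sc) (sc ⬝ᵥ W.mulVec v) (v ⬝ᵥ W.mulVec v) β σc
      hc hb (h0 v)
    have hfun : (fun t : ℝ => f0 + g ⬝ᵥ sc + (g ⬝ᵥ v)*t
        + (1/2)*(sc ⬝ᵥ H.mulVec sc + 2*(sc ⬝ᵥ H.mulVec v)*t + (v ⬝ᵥ H.mulVec v)*t^2)
        + (β/6)*((sc ⬝ᵥ W.mulVec sc + 2*(sc ⬝ᵥ W.mulVec v)*t + (v ⬝ᵥ W.mulVec v)*t^2)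
            * Real.sqrt (sc ⬝ᵥ W.mulVec sc + 2*(sc ⬝ᵥ W.mulVec v)*t + (v ⬝ᵥ W.mulVec v)*t^2))
        + (σc/4)*(sc ⬝ᵥ W.mulVec sc + 2*(sc ⬝ᵥ W.mulVec v)*t + (v ⬝ᵥ W.mulVec v)*t^2)^2)
        = fun t : ℝ => Mc f0 g H W β σc (sc + t • v) :=
      funext fun t => (Mc_expand f0 g H W β σc hH hW sc v t).symm
    rw [hfun]
    exact Eventually.of_forall fun t => by simpa using hmin (sc + t • v)
  -- the normal equation
  have hquad : ∀ x : Fin n → ℝ,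
      x ⬝ᵥ (H + ((β / 2) * normW W sc) • W + (σc * (normW W sc) ^ 2) • W).mulVec x
        = x ⬝ᵥ H.mulVec x
          + ((β/2)*Real.sqrt (sc ⬝ᵥ W.mulVec sc) + σc*(sc ⬝ᵥ W.mulVec sc)) * (x ⬝ᵥ W.mulVec x) := by
    intro x
    rw [Matrix.add_mulVec, Matrix.add_mulVec, Matrix.smul_mulVec, Matrix.smul_mulVec,
      dotProduct_add, dotProduct_add, dotProduct_smul, dotProduct_smul,
      hnrm2, hnrm]
    simp only [smul_eq_mul]
    ring
  have hBv : ∀ v : Fin n → ℝ,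
      ((H + ((β / 2) * normW W sc) • W + (σc * (normW W sc) ^ 2) • W).mulVec sc + g) ⬝ᵥ v
        = g ⬝ᵥ v + sc ⬝ᵥ H.mulVec v
          + ((β/2)*Real.sqrt (sc ⬝ᵥ W.mulVec sc) + σc*(sc ⬝ᵥ W.mulVec sc)) * (sc ⬝ᵥ W.mulVec v) := by
    intro v
    rw [add_dotProduct, Matrix.add_mulVec, Matrix.add_mulVec, Matrix.smul_mulVec,
      Matrix.smul_mulVec, add_dotProduct, add_dotProduct,
      smul_dotProduct, smul_dotProduct, hnrm2, hnrm]
    rw [dotProduct_comm (H.mulVec sc) v, bilin_symm hH v sc,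
      dotProduct_comm (W.mulVec sc) v, bilin_symm hWs v sc]
    simp only [smul_eq_mul]
    ring
  have hfoc : (H + ((β / 2) * normW W sc) • W + (σc * (normW W sc) ^ 2) • W).mulVec sc = -g := by
    have hself := hBv ((H + ((β / 2) * normW W sc) • W + (σc * (normW W sc) ^ 2) • W).mulVec sc + g)
    rw [key _] at hself
    have := dotProduct_self_eq_zero.1 hself
    exact eq_neg_of_add_eq_zero_left this
  refine ⟨hfoc, Matrix.PosSemidef.of_dotProduct_mulVec_nonneg ?_ ?_⟩
  · -- Hermitian
    have hsymm : (H + ((β / 2) * normW W sc) • W + (σc * (normW W sc) ^ 2) • W).IsSymm := by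
      rw [Matrix.IsSymm, Matrix.transpose_add, Matrix.transpose_add, Matrix.transpose_smul,
        Matrix.transpose_smul, hH.eq, hWs.eq]
    exact hsymm
  · -- pos semidef
    intro x
    simp only [star_trivial]
    rw [hquad x]
    by_cases ha : sc ⬝ᵥ W.mulVec x = 0
    · -- second-order / limit case
      have hb : 0 ≤ x ⬝ᵥ W.mulVec x := by simpa using hW.posSemidef.dotProduct_mulVec_nonneg x
      apply psd_case2 (x ⬝ᵥ H.mulVec x) (sc ⬝ᵥ W.mulVec sc) (x ⬝ᵥ W.mulVec x) β σc hc hb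
      intro t
      have h := hmin (sc + t • x)
      rw [Mc_expand f0 g H W β σc hH hW sc x t] at h
      have h0' := Mc_expand f0 g H W β σc hH hW sc x 0
      norm_num at h0'
      rw [h0'] at h
      have hgx : g ⬝ᵥ x = -(sc ⬝ᵥ H.mulVec x) := by
        have := key x
        rw [ha] at this
        linarith
      rw [hgx, ha] at h
      have harg : sc ⬝ᵥ W.mulVec sc + 2*(0:ℝ)*t + (x ⬝ᵥ W.mulVec x)*t^2
          = sc ⬝ᵥ W.mulVec sc + (x ⬝ᵥ W.mulVec x)*t^2 := by ring
      rw [harg] at h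
      linarith [h]
    · -- reflection case
      have hx0 : x ≠ 0 := by
        intro hx
        apply ha
        simp [hx]
      have hb : 0 < x ⬝ᵥ W.mulVec x := by
        have := hW.dotProduct_mulVec_pos hx0
        simpa using this
      apply psd_alg _ _ (sc ⬝ᵥ W.mulVec x) _ hb ha
      set a := sc ⬝ᵥ W.mulVec x with ha_def
      set b := x ⬝ᵥ W.mulVec x with hb_def
      set τ : ℝ := -(2*a/b) with hτ_def
      have h := hmin (sc + τ • x)
      rw [Mc_expand f0 g H W β σc hH hW sc x τ] at h
      have hq_eq : sc ⬝ᵥ W.mulVec sc + 2*a*τ + b*τ^2 = sc ⬝ᵥ W.mulVec sc := by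
        rw [hτ_def]
        field_simp
        ring
      rw [hq_eq] at h
      have h0' := Mc_expand f0 g H W β σc hH hW sc x 0
      norm_num at h0'
      rw [h0'] at h
      have hgx : g ⬝ᵥ x = -(sc ⬝ᵥ H.mulVec x)
          - ((β/2)*Real.sqrt (sc ⬝ᵥ W.mulVec sc) + σc*(sc ⬝ᵥ W.mulVec sc)) * a := by
        have := key x
        linarith
      rw [hgx] at h
      have hτ2 : τ = -(2*a/b) := hτ_def
      -- establish the needed inequality
      have hineq : 0 ≤ (1/2)*(x ⬝ᵥ H.mulVec x)*(2*a/b)^2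
          + ((β/2)*Real.sqrt (sc ⬝ᵥ W.mulVec sc) + σc*(sc ⬝ᵥ W.mulVec sc))*a*(2*a/b) := by
        have hτsq : τ^2 = (2*a/b)^2 := by rw [hτ2]; ring
        nlinarith [h]
      exact hineq
end

section
/- Let $M_c(s) = f_0 + g^T s + \tfrac12 s^T H s + \tfrac{\beta}{6}\|s\|_W^3 + \tfrac{\sigma_c}{4}\|s\|_W^4$ with $\sigma_c > 0$. Suppose $s_c \in \mathbb{R}^n$ satisfies: (i) $\big(H + \tfrac{\beta}{2}\|s_c\|_W W + \sigma_c \|s_c\|_W^2 W\big) s_c = -g$; (ii) $H + \tfrac{\beta}{2}\|s_c\|_W W + \sigma_c \|s_c\|_W^2 W \succeq 0$; and (iii) $\beta \ge -3\sigma_c \|s_c\|_W$. Then $s_c$ is a global minimizer of $M_c$ over $\mathbb{R}^n$. -/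
open Matrix

lemma symm_dot {n : ℕ} {A : Matrix (Fin n) (Fin n) ℝ} (hA : A.IsSymm)
    (u v : Fin n → ℝ) : u ⬝ᵥ A.mulVec v = v ⬝ᵥ A.mulVec u := by
  rw [dotProduct_mulVec, ← vecMul_transpose, hA.eq, dotProduct_comm]

theorem stmt_2 {n : ℕ} (f0 : ℝ) (g : Fin n → ℝ) (H W : Matrix (Fin n) (Fin n) ℝ)
    (β σc : ℝ) (hH : H.IsSymm) (hW : W.PosDef) (hσ : 0 < σc)
    (sc : Fin n → ℝ)
    (h1 : (H + ((β / 2) * normW W sc) • W + (σc * (normW W sc) ^ 2) • W).mulVec sc = -g)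
    (h2 : (H + ((β / 2) * normW W sc) • W + (σc * (normW W sc) ^ 2) • W).PosSemidef)
    (h3 : -3 * σc * normW W sc ≤ β) :
    ∀ s : Fin n → ℝ, Mc f0 g H W β σc sc ≤ Mc f0 g H W β σc s := by
  intro s
  set a := normW W sc with ha
  set t := normW W s with htdef
  have ha0 : 0 ≤ a := Real.sqrt_nonneg _
  have ht0 : 0 ≤ t := Real.sqrt_nonneg _
  have ha2 : sc ⬝ᵥ W.mulVec sc = a ^ 2 := by
    rw [ha, normW, sq, Real.mul_self_sqrt]
    simpa using hW.posSemidef.dotProduct_mulVec_nonneg sc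
  have ht2 : s ⬝ᵥ W.mulVec s = t ^ 2 := by
    rw [htdef, normW, sq, Real.mul_self_sqrt]
    simpa using hW.posSemidef.dotProduct_mulVec_nonneg s
  set p := s ⬝ᵥ H.mulVec s with hp
  set q := sc ⬝ᵥ H.mulVec s with hq
  set r := sc ⬝ᵥ H.mulVec sc with hr
  set u := sc ⬝ᵥ W.mulVec s with hu
  have hq' : s ⬝ᵥ H.mulVec sc = q := symm_dot hH s sc
  have hWs : W.IsSymm := by
    have := hW.posSemidef.1
    simpa [Matrix.IsHermitian, Matrix.IsSymm] using this
  have hu' : s ⬝ᵥ W.mulVec sc = u := symm_dot hWs s sc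
  set lam := (β / 2) * a + σc * a ^ 2 with hlam
  -- g in terms of B
  have hg : g = -((H + ((β / 2) * a) • W + (σc * a ^ 2) • W).mulVec sc) := by
    rw [h1]; simp
  have hgs : g ⬝ᵥ s = -(q + lam * u) := by
    rw [dotProduct_comm, hg]
    simp only [dotProduct_neg, add_mulVec, smul_mulVec, dotProduct_add,
      dotProduct_smul, smul_eq_mul, hq', hu', hlam]
    ring
  have hgc : g ⬝ᵥ sc = -(r + lam * a ^ 2) := by
    rw [dotProduct_comm, hg]
    simp only [dotProduct_neg, add_mulVec, smul_mulVec, dotProduct_add,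
      dotProduct_smul, smul_eq_mul, ha2, ← hr, hlam]
    ring
  -- positive semidefiniteness on s - sc
  have hD : 0 ≤ p - 2 * q + r + lam * (t ^ 2 - 2 * u + a ^ 2) := by
    have h0 := h2.dotProduct_mulVec_nonneg (s - sc)
    simp only [star_trivial] at h0
    calc (0:ℝ) ≤ _ := h0
    _ = p - 2 * q + r + lam * (t ^ 2 - 2 * u + a ^ 2) := by
        simp only [add_mulVec, smul_mulVec, mulVec_sub, dotProduct_add,
          sub_dotProduct, dotProduct_sub, dotProduct_smul, smul_eq_mul,
          hq', hu', ha2, ht2, hlam, hp, hq, hr, hu]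
        ring
  have key : 0 ≤ σc / 4 * (t - a) ^ 2 * (t + a) ^ 2 + β / 12 * (t - a) ^ 2 * (2 * t + a) := by
    nlinarith [mul_nonneg (mul_nonneg (sq_nonneg (t - a)) (by linarith : (0:ℝ) ≤ 2 * t + a))
        (by linarith : (0:ℝ) ≤ β + 3 * σc * a),
      mul_nonneg (mul_nonneg hσ.le (sq_nonneg (t - a))) (sq_nonneg t)]
  have heq : Mc f0 g H W β σc s - Mc f0 g H W β σc sc
      = (1 / 2) * (p - 2 * q + r + lam * (t ^ 2 - 2 * u + a ^ 2))
        + (σc / 4 * (t - a) ^ 2 * (t + a) ^ 2 + β / 12 * (t - a) ^ 2 * (2 * t + a)) := by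
    simp only [Mc, ← ha, ← htdef, hgs, hgc, ← hp, ← hr, hlam]
    ring
  clear h1 h2 hg hgs hgc ha2 ht2 hq' hu' ha htdef hp hq hr hu hlam
  clear_value a t p q r u lam
  linarith [hD, key, heq.ge, heq.le]
end
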